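/- Let G be a finite simple connected graph containing two vertex-disjoint cycles. Then G contains the graph I as a minor. -/

import Mathlib

/-- `H` is a minor of `G`: there is an assignment of pairwise disjoint, connected,
nonempty branch sets in `G` to the vertices of `H`, with an edge of `G` between the
branch sets of any two adjacent vertices of `H`. -/
def SimpleGraph.IsMinorOf {W V : Type*} (H : SimpleGraph W) (G : SimpleGraph V) : Prop :=
  ∃ φ : W → Set V,
    (∀ w, (G.induce (φ w)).Connected) ∧
    (Pairwise fun w w' => Disjoint (φ w) (φ w')) ∧
    ∀ ⦃w w'⦄, H.Adj w w' → ∃ a ∈ φ w, ∃ b ∈ φ w', G.Adj a b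

/-- The graph `I`: the six-vertex double star obtained from an edge `uv` by attaching
two pendant vertices to `u` and two pendant vertices to `v`. -/
def GraphI : SimpleGraph (Fin 6) :=
  SimpleGraph.fromEdgeSet {s(0, 1), s(0, 2), s(0, 3), s(1, 4), s(1, 5)}

open SimpleGraph Walk in
/-- Every vertex of a cycle has two distinct neighbors on the cycle. -/
lemma exists_two_nbrs {V : Type*} {G : SimpleGraph V} {a : V} (d : G.Walk a a) (hd : d.IsCycle) :
    ∃ p q : V, p ≠ q ∧ G.Adj a p ∧ G.Adj a q ∧ p ∈ d.support ∧ q ∈ d.support := by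
  obtain ⟨x, hax, t, rfl⟩ := (Walk.not_nil_iff).mp hd.not_nil
  obtain ⟨ht, hxe⟩ := (Walk.cons_isCycle_iff t hax).mp hd
  have hxa : x ≠ a := hax.ne'
  have hrpath : t.reverse.IsPath := ht.reverse
  have hrnil : ¬t.reverse.Nil := Walk.not_nil_of_ne (fun h => hxa h.symm)
  have haq : G.Adj a (t.reverse.getVert 1) := Walk.adj_snd hrnil
  have hq_mem_r : t.reverse.getVert 1 ∈ t.reverse.support := by
    rw [Walk.mem_support_iff_exists_getVert]
    exact ⟨1, rfl, Walk.not_nil_iff_lt_length.mp hrnil⟩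
  have hq_mem : t.reverse.getVert 1 ∈ t.support := by
    rwa [Walk.support_reverse, List.mem_reverse] at hq_mem_r
  refine ⟨x, t.reverse.getVert 1, ?_, hax, haq, ?_, ?_⟩
  · intro hxq
    obtain ⟨y, hay, s, hrs⟩ := (Walk.not_nil_iff).mp hrnil
    have hy : t.reverse.getVert 1 = y := by rw [hrs]; exact Walk.snd_cons s hay
    have hxy : x = y := hxq.trans hy
    subst hxy
    rw [hrs] at hrpath
    have hs : s.IsPath := ((Walk.cons_isPath_iff _ _).mp hrpath).1
    have hsnil : s = Walk.nil := Walk.isPath_iff_eq_nil.mp hs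
    have hlen : t.reverse.length = 1 := by rw [hrs, hsnil]; rfl
    have h3 := hd.three_le_length
    rw [Walk.length_cons] at h3
    rw [Walk.length_reverse] at hlen
    omega
  · exact List.mem_cons_of_mem _ t.start_mem_support
  · exact List.mem_cons_of_mem _ hq_mem

/-- A finite simple connected graph containing two vertex-disjoint cycles contains
the double star `I` as a minor. -/
theorem disjoint_cycles_I_minor {V : Type*} [Fintype V] (G : SimpleGraph V)
    (hconn : G.Connected) {u u' : V} (c : G.Walk u u) (c' : G.Walk u' u')
    (hc : c.IsCycle) (hc' : c'.IsCycle)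
    (hdisj : ∀ v, v ∈ c.support → v ∉ c'.support) :
    GraphI.IsMinorOf G := by
  classical
  have hex : ∃ n, ∃ x y : V, ∃ P : G.Walk x y,
      x ∈ c.support ∧ y ∈ c'.support ∧ P.IsPath ∧ P.length = n := by
    obtain ⟨w⟩ := hconn u u'
    exact ⟨(w.toPath : G.Walk u u').length, u, u', w.toPath,
      c.start_mem_support, c'.start_mem_support, w.toPath.2, rfl⟩
  obtain ⟨a, b, P, ha, hb, hP, hPlen⟩ := Nat.find_spec hex
  -- every vertex of P on c is a; every vertex of P on c' is b
  have hPa : ∀ x, x ∈ P.support → x ∈ c.support → x = a := by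
    intro x hx hxc
    by_contra hxa
    have hsplit := congrArg SimpleGraph.Walk.length (P.take_spec hx)
    rw [SimpleGraph.Walk.length_append] at hsplit
    have htnz : (P.takeUntil x hx).length ≠ 0 := by
      intro h0
      exact hxa ((SimpleGraph.Walk.nil_iff_length_eq.mpr h0).eq).symm
    have hlt : (P.dropUntil x hx).length < Nat.find hex := by omega
    exact Nat.find_min hex hlt ⟨x, b, P.dropUntil x hx, hxc, hb, hP.dropUntil hx, rfl⟩
  have hPb : ∀ x, x ∈ P.support → x ∈ c'.support → x = b := by
    intro x hx hxc
    by_contra hxb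
    have hsplit := congrArg SimpleGraph.Walk.length (P.take_spec hx)
    rw [SimpleGraph.Walk.length_append] at hsplit
    have hdnz : (P.dropUntil x hx).length ≠ 0 := by
      intro h0
      exact hxb ((SimpleGraph.Walk.nil_iff_length_eq.mpr h0).eq)
    have hlt : (P.takeUntil x hx).length < Nat.find hex := by omega
    exact Nat.find_min hex hlt ⟨a, x, P.takeUntil x hx, ha, hxc, hP.takeUntil hx, rfl⟩
  have hab : a ≠ b := fun h => hdisj a ha (h ▸ hb)
  -- two neighbors of a on c
  obtain ⟨p, q, hpq, hap, haq, hpd, hqd⟩ := exists_two_nbrs (c.rotate a ha) (hc.rotate ha)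
  have hrot : ∀ y, y ∈ (c.rotate a ha).support → y ∈ c.support := by
    intro y hy
    rw [SimpleGraph.Walk.support_eq_cons] at hy
    rcases List.mem_cons.mp hy with rfl | hy'
    · exact ha
    · exact List.mem_of_mem_tail ((SimpleGraph.Walk.support_rotate c a ha).mem_iff.mp hy')
  have hpc : p ∈ c.support := hrot p hpd
  have hqc : q ∈ c.support := hrot q hqd
  -- two neighbors of b on c'
  obtain ⟨p', q', hpq', hbp', hbq', hpd', hqd'⟩ := exists_two_nbrs (c'.rotate b hb) (hc'.rotate hb)
  have hrot' : ∀ y, y ∈ (c'.rotate b hb).support → y ∈ c'.support := by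
    intro y hy
    rw [SimpleGraph.Walk.support_eq_cons] at hy
    rcases List.mem_cons.mp hy with rfl | hy'
    · exact hb
    · exact List.mem_of_mem_tail ((SimpleGraph.Walk.support_rotate c' b hb).mem_iff.mp hy')
  have hpc' : p' ∈ c'.support := hrot' p' hpd'
  have hqc' : q' ∈ c'.support := hrot' q' hqd'
  -- the branch set of vertex 0 : the path P minus its endpoint b
  have hrev_nnil : ¬P.reverse.Nil := SimpleGraph.Walk.not_nil_of_ne (Ne.symm hab)
  set W := P.reverse.tail with hWdef
  have hWsupp : W.support = P.reverse.support.tail :=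
    SimpleGraph.Walk.support_tail_of_not_nil _ hrev_nnil
  have hWsub : ∀ y, y ∈ W.support → y ∈ P.support := by
    intro y hy
    rw [hWsupp] at hy
    have hy' := List.mem_of_mem_tail hy
    rwa [SimpleGraph.Walk.support_reverse, List.mem_reverse] at hy'
  have hbW : b ∉ W.support := by
    intro hbw
    rw [hWsupp] at hbw
    have hnd := hP.reverse.support_nodup
    rw [SimpleGraph.Walk.support_eq_cons] at hnd
    exact (List.nodup_cons.mp hnd).1 hbw
  have haW : a ∈ W.support := W.end_mem_support
  have hzb : G.Adj (P.reverse.getVert 1) b := (SimpleGraph.Walk.adj_snd hrev_nnil).symm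
  have hzW : P.reverse.getVert 1 ∈ W.support := W.start_mem_support
  -- non-membership facts
  have hpW : p ∉ W.support := fun h => hap.ne ((hPa p (hWsub p h) hpc).symm)
  have hqW : q ∉ W.support := fun h => haq.ne ((hPa q (hWsub q h) hqc).symm)
  have hp'W : p' ∉ W.support := fun h => hbW (by rwa [hPb p' (hWsub p' h) hpc'] at h)
  have hq'W : q' ∉ W.support := fun h => hbW (by rwa [hPb q' (hWsub q' h) hqc'] at h)
  have hpb : p ≠ b := fun h => hdisj p hpc (h ▸ hb)
  have hqb : q ≠ b := fun h => hdisj q hqc (h ▸ hb)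
  have hpp' : p ≠ p' := fun h => hdisj p hpc (h ▸ hpc')
  have hpq'' : p ≠ q' := fun h => hdisj p hpc (h ▸ hqc')
  have hqp' : q ≠ p' := fun h => hdisj q hqc (h ▸ hpc')
  have hqq' : q ≠ q' := fun h => hdisj q hqc (h ▸ hqc')
  -- disjointness facts
  have D01 : Disjoint {v | v ∈ W.support} ({b} : Set V) :=
    Set.disjoint_right.mpr (by simpa using hbW)
  have D02 : Disjoint {v | v ∈ W.support} ({p} : Set V) :=
    Set.disjoint_right.mpr (by simpa using hpW)
  have D03 : Disjoint {v | v ∈ W.support} ({q} : Set V) :=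
    Set.disjoint_right.mpr (by simpa using hqW)
  have D04 : Disjoint {v | v ∈ W.support} ({p'} : Set V) :=
    Set.disjoint_right.mpr (by simpa using hp'W)
  have D05 : Disjoint {v | v ∈ W.support} ({q'} : Set V) :=
    Set.disjoint_right.mpr (by simpa using hq'W)
  have D12 : Disjoint ({b} : Set V) ({p} : Set V) := by simp [hpb.symm]
  have D13 : Disjoint ({b} : Set V) ({q} : Set V) := by simp [hqb.symm]
  have D14 : Disjoint ({b} : Set V) ({p'} : Set V) := by simp [hbp'.ne]
  have D15 : Disjoint ({b} : Set V) ({q'} : Set V) := by simp [hbq'.ne]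
  have D23 : Disjoint ({p} : Set V) ({q} : Set V) := by simp [hpq]
  have D24 : Disjoint ({p} : Set V) ({p'} : Set V) := by simp [hpp']
  have D25 : Disjoint ({p} : Set V) ({q'} : Set V) := by simp [hpq'']
  have D34 : Disjoint ({q} : Set V) ({p'} : Set V) := by simp [hqp']
  have D35 : Disjoint ({q} : Set V) ({q'} : Set V) := by simp [hqq']
  have D45 : Disjoint ({p'} : Set V) ({q'} : Set V) := by simp [hpq']
  refine ⟨![{v | v ∈ W.support}, {b}, {p}, {q}, {p'}, {q'}], ?_, ?_, ?_⟩
  · have hsingle : ∀ x : V, (G.induce ({x} : Set V)).Connected := by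
      intro x
      simpa using (SimpleGraph.Subgraph.singletonSubgraph_connected (G := G) (v := x)).induce_verts
    intro w
    fin_cases w
    · exact W.connected_induce_support
    · exact hsingle b
    · exact hsingle p
    · exact hsingle q
    · exact hsingle p'
    · exact hsingle q'
  · intro i j hij
    fin_cases i <;> fin_cases j <;>
      first
        | exact absurd rfl hij
        | exact D01 | exact D01.symm | exact D02 | exact D02.symm
        | exact D03 | exact D03.symm | exact D04 | exact D04.symm
        | exact D05 | exact D05.symm | exact D12 | exact D12.symm
        | exact D13 | exact D13.symm | exact D14 | exact D14.symm
        | exact D15 | exact D15.symm | exact D23 | exact D23.symm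
        | exact D24 | exact D24.symm | exact D25 | exact D25.symm
        | exact D34 | exact D34.symm | exact D35 | exact D35.symm
        | exact D45 | exact D45.symm
  · intro w w' hw
    rw [GraphI, SimpleGraph.fromEdgeSet_adj] at hw
    have hmem := hw.1
    simp only [Set.mem_insert_iff, Set.mem_singleton_iff, Sym2.eq, Sym2.rel_iff',
      Prod.mk.injEq, Prod.swap_prod_mk] at hmem
    rcases hmem with (⟨rfl, rfl⟩ | ⟨rfl, rfl⟩) | (⟨rfl, rfl⟩ | ⟨rfl, rfl⟩) |
      (⟨rfl, rfl⟩ | ⟨rfl, rfl⟩) | (⟨rfl, rfl⟩ | ⟨rfl, rfl⟩) | (⟨rfl, rfl⟩ | ⟨rfl, rfl⟩)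
    · exact ⟨P.reverse.getVert 1, hzW, b, rfl, hzb⟩
    · exact ⟨b, rfl, P.reverse.getVert 1, hzW, hzb.symm⟩
    · exact ⟨a, haW, p, rfl, hap⟩
    · exact ⟨p, rfl, a, haW, hap.symm⟩
    · exact ⟨a, haW, q, rfl, haq⟩
    · exact ⟨q, rfl, a, haW, haq.symm⟩
    · exact ⟨b, rfl, p', rfl, hbp'⟩
    · exact ⟨p', rfl, b, rfl, hbp'.symm⟩
    · exact ⟨b, rfl, q', rfl, hbq'⟩
    · exact ⟨q', rfl, b, rfl, hbq'.symm⟩
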